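/- Suppose F satisfies F-MON↑ (F_s(w,s)/(s-w) increasing in w), and let α⁺: ℝ₊ → ℝ₋ be nonincreasing with inverse a⁺; set ā(w) = w for w ≥ 0 and ā(w) = a⁺(w) for w < 0. Define λ_{α⁺}(r) = F_s(α⁺(r),r)/(r - α⁺(r)), Φ_{α⁺}(w,s) = ∫_0^s λ_{α⁺}(r)(r-w) dr and ξ_{α⁺}(w) = F(w, ā(w)) - Φ_{α⁺}(w, ā(w)). Then for all w ≤ s, ξ_{α⁺}(w) + Φ_{α⁺}(w,s) ≤ F(w,s), with equality at w = s and at w = α⁺(s). -/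
import Mathlib

open MeasureTheory Set intervalIntegral

lemma ftc_aux (F Fs : ℝ → ℝ → ℝ)
    (hderiv : ∀ w s, w ≤ s → 0 ≤ s → HasDerivAt (F w) (Fs w s) s)
    (hcont : Continuous fun p : ℝ × ℝ => Fs p.1 p.2)
    (w t s : ℝ) (hwt : w ≤ t) (hws : w ≤ s) (ht : 0 ≤ t) (hs : 0 ≤ s) :
    ∫ r in t..s, Fs w r = F w s - F w t := by
  apply intervalIntegral.integral_eq_sub_of_hasDerivAt
  · intro r hr
    rcases Set.mem_uIcc.mp hr with ⟨h1, h2⟩ | ⟨h1, h2⟩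
    · exact hderiv w r (le_trans hwt h1) (le_trans ht h1)
    · exact hderiv w r (le_trans hws h1) (le_trans hs h1)
  · exact (hcont.comp (Continuous.prodMk_right w)).intervalIntegrable t s

lemma ae_ne_aux (c : ℝ) : ∀ᵐ x : ℝ, x ≠ c := by
  rw [MeasureTheory.ae_iff]
  simpa using MeasureTheory.measure_singleton c

theorem stmt_10 (F Fs : ℝ → ℝ → ℝ)
    (hderiv : ∀ w s, w ≤ s → 0 ≤ s → HasDerivAt (F w) (Fs w s) s)
    (hcont : Continuous fun p : ℝ × ℝ => Fs p.1 p.2)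
    (hmon : ∀ s : ℝ, 0 ≤ s → ∀ w w', w ≤ w' → w' < s →
      Fs w s / (s - w) ≤ Fs w' s / (s - w'))
    (α a abar : ℝ → ℝ)
    (hαanti : AntitoneOn α (Ici (0 : ℝ)))
    (hαle : ∀ s : ℝ, 0 ≤ s → α s ≤ 0)
    (ha_nonneg : ∀ w : ℝ, w < 0 → 0 ≤ a w)
    (hinv1 : ∀ w r : ℝ, w < 0 → a w < r → α r ≤ w)
    (hinv2 : ∀ w r : ℝ, w < 0 → 0 ≤ r → r < a w → w ≤ α r)
    (habar : ∀ w, abar w = if 0 ≤ w then w else a w)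
    (hint : ∀ w s : ℝ, 0 ≤ s →
      IntervalIntegrable (fun r => Fs (α r) r / (r - α r) * (r - w)) volume 0 s) :
    ∀ w s : ℝ, w ≤ s → 0 ≤ s →
      ((F w (abar w) - ∫ r in (0 : ℝ)..(abar w), Fs (α r) r / (r - α r) * (r - w))
          + (∫ r in (0 : ℝ)..s, Fs (α r) r / (r - α r) * (r - w)) ≤ F w s) ∧
      (F s s =
        (F s (abar s) - ∫ r in (0 : ℝ)..(abar s), Fs (α r) r / (r - α r) * (r - s))
          + ∫ r in (0 : ℝ)..s, Fs (α r) r / (r - α r) * (r - s)) ∧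
      (F (α s) s =
        (F (α s) (abar (α s))
            - ∫ r in (0 : ℝ)..(abar (α s)), Fs (α r) r / (r - α r) * (r - α s))
          + ∫ r in (0 : ℝ)..s, Fs (α r) r / (r - α r) * (r - α s)) := by
  intro w s hws hs
  have hFscont : ∀ c : ℝ, Continuous (Fs c) := fun c => hcont.comp (Continuous.prodMk_right c)
  refine ⟨?_, ?_, ?_⟩
  · -- inequality
    set t := abar w with htdef
    have hteq : t = if 0 ≤ w then w else a w := habar w
    have ht0 : 0 ≤ t := by
      rcases le_or_gt 0 w with h | h
      · rw [hteq, if_pos h]; exact h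
      · rw [hteq, if_neg (not_le.mpr h)]; exact ha_nonneg w h
    have hwt : w ≤ t := by
      rcases le_or_gt 0 w with h | h
      · rw [hteq, if_pos h]
      · exact le_trans h.le ht0
    have ftc := ftc_aux F Fs hderiv hcont w t s hwt hws ht0 hs
    have hsub : (∫ r in (0:ℝ)..s, Fs (α r) r / (r - α r) * (r - w))
        - ∫ r in (0:ℝ)..t, Fs (α r) r / (r - α r) * (r - w)
        = ∫ r in t..s, Fs (α r) r / (r - α r) * (r - w) :=
      intervalIntegral.integral_interval_sub_left (hint w s hs) (hint w t ht0)
    have hgint : IntervalIntegrable (fun r => Fs (α r) r / (r - α r) * (r - w)) volume t s :=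
      (hint w t ht0).symm.trans (hint w s hs)
    have hfint : IntervalIntegrable (fun r => Fs w r) volume t s :=
      (hFscont w).intervalIntegrable t s
    have key : (∫ r in t..s, Fs (α r) r / (r - α r) * (r - w)) ≤ ∫ r in t..s, Fs w r := by
      rcases le_or_gt t s with hts | hts
      · apply intervalIntegral.integral_mono_ae_restrict hts hgint hfint
        filter_upwards [ae_restrict_of_ae (ae_ne_aux t),
          ae_restrict_mem measurableSet_Icc] with r hrt hr
        have hr1 : t < r := lt_of_le_of_ne hr.1 (Ne.symm hrt)
        have hr0 : 0 < r := lt_of_le_of_lt ht0 hr1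
        have hwr : w < r := lt_of_le_of_lt hwt hr1
        have hαw : α r ≤ w := by
          rcases le_or_gt 0 w with h | h
          · exact (hαle r hr0.le).trans h
          · exact hinv1 w r h (by rw [hteq, if_neg (not_le.mpr h)] at hr1; exact hr1)
        have hm := hmon r hr0.le (α r) w hαw hwr
        calc Fs (α r) r / (r - α r) * (r - w) ≤ Fs w r / (r - w) * (r - w) :=
              mul_le_mul_of_nonneg_right hm (by linarith)
          _ = Fs w r := div_mul_cancel₀ _ (sub_ne_zero.mpr hwr.ne')
      · have hw0 : w < 0 := by
          by_contra h
          push_neg at h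
          rw [hteq, if_pos h] at hts
          exact absurd hws (not_le.mpr hts)
        have hta : t = a w := by rw [hteq, if_neg (not_le.mpr hw0)]
        rw [intervalIntegral.integral_symm s t, intervalIntegral.integral_symm s t]
        apply neg_le_neg
        apply intervalIntegral.integral_mono_ae_restrict hts.le hfint.symm hgint.symm
        filter_upwards [ae_restrict_of_ae (ae_ne_aux t), ae_restrict_of_ae (ae_ne_aux 0),
          ae_restrict_mem measurableSet_Icc] with r hrt hr0' hr
        have hr2 : r < t := lt_of_le_of_ne hr.2 hrt
        have hr0 : 0 < r := lt_of_le_of_ne (le_trans hs hr.1) (Ne.symm hr0')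
        have hαw : w ≤ α r := hinv2 w r hw0 hr0.le (hta ▸ hr2)
        have hαr : α r < r := lt_of_le_of_lt (hαle r hr0.le) hr0
        have hm := hmon r hr0.le w (α r) hαw hαr
        have hw2 : (0:ℝ) < r - w := by linarith
        calc Fs w r = Fs w r / (r - w) * (r - w) := (div_mul_cancel₀ _ hw2.ne').symm
          _ ≤ Fs (α r) r / (r - α r) * (r - w) := mul_le_mul_of_nonneg_right hm hw2.le
    linarith
  · rw [habar s, if_pos hs]; ring
  · -- equality at w = α s
    set w' := α s with hw'def
    have hw'0 : w' ≤ 0 := hαle s hs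
    set t := abar w' with htdef
    have hteq : t = if 0 ≤ w' then w' else a w' := habar w'
    have ht0 : 0 ≤ t := by
      rcases le_or_gt 0 w' with h | h
      · rw [hteq, if_pos h]; exact h
      · rw [hteq, if_neg (not_le.mpr h)]; exact ha_nonneg w' h
    have hwt : w' ≤ t := by
      rcases le_or_gt 0 w' with h | h
      · rw [hteq, if_pos h]
      · exact le_trans h.le ht0
    have hw's : w' ≤ s := hw'0.trans hs
    have ftc := ftc_aux F Fs hderiv hcont w' t s hwt hw's ht0 hs
    have hsub : (∫ r in (0:ℝ)..s, Fs (α r) r / (r - α r) * (r - w'))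
        - ∫ r in (0:ℝ)..t, Fs (α r) r / (r - α r) * (r - w')
        = ∫ r in t..s, Fs (α r) r / (r - α r) * (r - w') :=
      intervalIntegral.integral_interval_sub_left (hint w' s hs) (hint w' t ht0)
    have key : (∫ r in t..s, Fs (α r) r / (r - α r) * (r - w')) = ∫ r in t..s, Fs w' r := by
      apply intervalIntegral.integral_congr_ae
      filter_upwards [ae_ne_aux t, ae_ne_aux 0] with r hrt hr0' hr
      rcases le_or_gt t s with hts | hts
      · rw [Set.uIoc_of_le hts] at hr
        have hr1 : t < r := hr.1
        have hr0 : 0 < r := lt_of_le_of_lt ht0 hr1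
        have hge : w' ≤ α r := hαanti (mem_Ici.mpr hr0.le) (mem_Ici.mpr hs) hr.2
        have hle' : α r ≤ w' := by
          rcases le_or_gt 0 w' with h | h
          · exact (hαle r hr0.le).trans h
          · exact hinv1 w' r h (by rw [hteq, if_neg (not_le.mpr h)] at hr1; exact hr1)
        rw [le_antisymm hle' hge]
        exact div_mul_cancel₀ _ (by nlinarith)
      · rw [Set.uIoc_comm, Set.uIoc_of_le hts.le] at hr
        have hw0 : w' < 0 := by
          by_contra h
          push_neg at h
          rw [hteq, if_pos h] at hts
          exact absurd (hw'0.trans hs) (not_le.mpr hts)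
        have hta : t = a w' := by rw [hteq, if_neg (not_le.mpr hw0)]
        have hr2 : r < t := lt_of_le_of_ne hr.2 hrt
        have hr0 : 0 < r := lt_of_le_of_lt hs hr.1
        have hge : w' ≤ α r := hinv2 w' r hw0 hr0.le (hta ▸ hr2)
        have hle' : α r ≤ w' := hαanti (mem_Ici.mpr hs) (mem_Ici.mpr hr0.le) hr.1.le
        rw [le_antisymm hle' hge]
        exact div_mul_cancel₀ _ (by nlinarith)
    linarith
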